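/- Let p > 1 and f(x) = (x+1)^p. There exist constants C > 0 and n_0 such that for all n ≥ n_0, all independent sequences {X_j}_{j≥n} with X_j exponentially distributed with rate f(j), and all δ > 0: P(∑_{j≥n} X_j > E[∑_{j≥n} X_j] + δ) ≤ C e^{-δ n^{p-1/2}} and P(∑_{j≥n} X_j < E[∑_{j≥n} X_j] − δ) ≤ C e^{-δ n^{p-1/2}}. -/

import Mathlib

open MeasureTheory ProbabilityTheory Real Filter Set Topology

/-- `X` is exponentially distributed with rate `l` under `μ`:
`P(X > t) = exp (-l * t)` for all `t ≥ 0`. -/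
def IsExponential {Ω : Type*} [MeasurableSpace Ω] (μ : Measure Ω)
    (X : Ω → ℝ) (l : ℝ) : Prop :=
  ∀ t : ℝ, 0 ≤ t → μ {ω | t < X ω} = ENNReal.ofReal (Real.exp (-l * t))

section Aux

lemma isExp_pos_ae {Ω : Type*} [MeasurableSpace Ω] {μ : Measure Ω} [IsProbabilityMeasure μ]
    {X : Ω → ℝ} (hX : Measurable X) {l : ℝ} (hexp : IsExponential μ X l) :
    ∀ᵐ ω ∂μ, 0 < X ω := by
  have h1 : μ {ω | 0 < X ω} = 1 := by simpa using hexp 0 le_rfl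
  have : μ {ω | 0 < X ω}ᶜ = 0 := by
    rw [measure_compl (measurableSet_lt measurable_const hX) (measure_ne_top _ _), h1,
      measure_univ, tsub_self]
  exact (MeasureTheory.ae_iff).2 (by simpa [Set.compl_setOf] using this)

lemma lint_exp_pos {Ω : Type*} [MeasurableSpace Ω] (μ : Measure Ω) [IsProbabilityMeasure μ]
    {X : Ω → ℝ} (hX : Measurable X) {l t : ℝ} (hexp : IsExponential μ X l)
    (ht : 0 < t) (htl : t < l) :
    ∫⁻ ω, ENNReal.ofReal (Real.exp (t * X ω)) ∂μ = ENNReal.ofReal (l / (l - t)) := by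
  have hl : 0 < l := ht.trans htl
  have hlt : (0:ℝ) < l - t := by linarith
  have h1 : μ {ω | 0 < X ω} = 1 := by simpa using hexp 0 le_rfl
  rw [lintegral_eq_lintegral_meas_lt μ (ae_of_all _ fun ω => (Real.exp_pos _).le)
    ((hX.const_mul t).exp).aemeasurable]
  have hsplit : (Ioi (0:ℝ)) = Ioc (0:ℝ) 1 ∪ Ioi 1 := (Set.Ioc_union_Ioi_eq_Ioi zero_le_one).symm
  rw [hsplit, lintegral_union measurableSet_Ioi (Set.Ioc_disjoint_Ioi le_rfl)]
  have hA : ∫⁻ s in Ioc (0:ℝ) 1, μ {a | s < Real.exp (t * X a)} = 1 := by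
    rw [setLIntegral_congr_fun measurableSet_Ioc
      (show EqOn (fun s => μ {a | s < Real.exp (t * X a)}) (fun _ => 1) (Ioc (0:ℝ) 1) from
        fun s hs => (?_ : μ {a | s < Real.exp (t * X a)} = 1))]
    · simp [Real.volume_Ioc]
    · refine le_antisymm prob_le_one ?_
      rw [← h1]
      refine measure_mono fun a ha => ?_
      have : (1:ℝ) < Real.exp (t * X a) := by
        rw [← Real.exp_zero, Real.exp_lt_exp]
        exact mul_pos ht ha
      exact lt_of_le_of_lt hs.2 this
  have hB : ∫⁻ s in Ioi (1:ℝ), μ {a | s < Real.exp (t * X a)} = ENNReal.ofReal (t/(l-t)) := by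
    have he : -(l/t) < -1 := by
      rw [neg_lt_neg_iff]
      rw [lt_div_iff₀ ht]
      linarith
    rw [setLIntegral_congr_fun measurableSet_Ioi
      (show EqOn (fun s => μ {a | s < Real.exp (t * X a)}) (fun s => ENNReal.ofReal (s ^ (-(l/t))))
        (Ioi (1:ℝ)) from fun s hs =>
        (?_ : μ {a | s < Real.exp (t * X a)} = ENNReal.ofReal (s ^ (-(l/t)))))]
    · rw [← ofReal_integral_eq_lintegral_ofReal (integrableOn_Ioi_rpow_of_lt he one_pos)
        ((ae_restrict_mem measurableSet_Ioi).mono fun s hs =>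
          Real.rpow_nonneg (le_trans zero_le_one hs.le) _)]
      rw [integral_Ioi_rpow_of_lt he one_pos, Real.one_rpow]
      congr 1
      rw [div_eq_div_iff (by linarith : (-(l/t) + 1 : ℝ) ≠ 0) hlt.ne']
      field_simp
      ring
    · have hs1 : (1:ℝ) < s := hs
      have hs0 : (0:ℝ) < s := lt_trans one_pos hs1
      have hset : {a | s < Real.exp (t * X a)} = {a | Real.log s / t < X a} := by
        ext a
        simp only [Set.mem_setOf_eq]
        rw [← Real.log_lt_iff_lt_exp hs0, ← div_lt_iff₀' ht]
      rw [hset, hexp _ (div_nonneg (Real.log_nonneg hs1.le) ht.le)]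
      rw [Real.rpow_def_of_pos hs0]
      congr 1
      ring
  rw [hA, hB, ← ENNReal.ofReal_one, ← ENNReal.ofReal_add zero_le_one (by positivity)]
  congr 1
  field_simp
  ring

lemma lint_exp_neg {Ω : Type*} [MeasurableSpace Ω] (μ : Measure Ω) [IsProbabilityMeasure μ]
    {X : Ω → ℝ} (hX : Measurable X) {l t : ℝ} (hexp : IsExponential μ X l)
    (ht : 0 < t) (hl : 0 < l) :
    ∫⁻ ω, ENNReal.ofReal (Real.exp (-t * X ω)) ∂μ = ENNReal.ofReal (l / (l + t)) := by
  have hpos := isExp_pos_ae hX hexp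
  set g : Ω → ℝ := fun a => 1 - Real.exp (-t * X a) with hg
  have hgm : Measurable g := measurable_const.sub ((hX.const_mul (-t)).exp)
  have hgnn : ∀ᵐ a ∂μ, 0 ≤ g a := by
    filter_upwards [hpos] with a ha
    have h2 : Real.exp (-t * X a) ≤ 1 := by
      rw [← Real.exp_zero, Real.exp_le_exp]
      nlinarith [mul_pos ht ha]
    show 0 ≤ 1 - Real.exp (-t * X a)
    linarith
  have hEg : ∫⁻ a, ENNReal.ofReal (g a) ∂μ = ENNReal.ofReal (t / (l + t)) := by
    rw [lintegral_eq_lintegral_meas_lt μ hgnn hgm.aemeasurable]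
    have hsplit : (Ioi (0:ℝ)) = Ioo (0:ℝ) 1 ∪ Ici 1 := (Set.Ioo_union_Ici_eq_Ioi zero_lt_one).symm
    rw [hsplit, lintegral_union measurableSet_Ici
      (Set.disjoint_left.mpr fun s hs h1 => absurd hs.2 (not_lt.2 h1))]
    have hB : ∫⁻ s in Ici (1:ℝ), μ {a | s < g a} = 0 := by
      rw [setLIntegral_congr_fun measurableSet_Ici
        (show EqOn (fun s => μ {a | s < g a}) (fun _ => 0) (Ici (1:ℝ)) from
          fun s hs => (?_ : μ {a | s < g a} = 0))]
      · simp
      · have : {a | s < g a} = ∅ := by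
          ext a
          simp only [Set.mem_setOf_eq, Set.mem_empty_iff_false, iff_false, not_lt, hg]
          have := (Real.exp_pos (-t * X a)).le
          have h1s : (1:ℝ) ≤ s := hs
          linarith
        rw [this, measure_empty]
    have hA : ∫⁻ s in Ioo (0:ℝ) 1, μ {a | s < g a} = ENNReal.ofReal (t / (l + t)) := by
      have hc : (0:ℝ) < l / t := div_pos hl ht
      rw [setLIntegral_congr_fun measurableSet_Ioo
        (show EqOn (fun s => μ {a | s < g a}) (fun s => ENNReal.ofReal ((1 - s) ^ (l/t)))
          (Ioo (0:ℝ) 1) from fun s hs =>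
          (?_ : μ {a | s < g a} = ENNReal.ofReal ((1 - s) ^ (l/t))))]
      · rw [Measure.restrict_congr_set Ioo_ae_eq_Ioc]
        have hint : IntegrableOn (fun s : ℝ => (1 - s) ^ (l/t)) (Ioc 0 1) volume := by
          refine Measure.integrableOn_of_bounded (M := 1) (by simp [Real.volume_Ioc]) ?_ ?_
          · exact ((continuous_const.sub continuous_id).rpow_const
              (fun x => Or.inr hc.le)).aestronglyMeasurable
          · filter_upwards [ae_restrict_mem measurableSet_Ioc] with s hs
            rw [Real.norm_eq_abs, abs_of_nonneg (Real.rpow_nonneg (by linarith [hs.2]) _)]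
            exact Real.rpow_le_one (by linarith [hs.2]) (by linarith [hs.1]) hc.le
        rw [← ofReal_integral_eq_lintegral_ofReal hint
          ((ae_restrict_mem measurableSet_Ioc).mono fun s hs =>
            Real.rpow_nonneg (by linarith [hs.2]) _)]
        congr 1
        rw [← intervalIntegral.integral_of_le zero_le_one]
        have := intervalIntegral.integral_comp_sub_left (a := 0) (b := 1)
          (fun x : ℝ => x ^ (l/t)) 1
        simp only [sub_zero, sub_self] at this
        rw [this, integral_rpow (Or.inl (by linarith : (-1:ℝ) < l/t))]
        rw [Real.one_rpow, Real.zero_rpow (by positivity : l/t + 1 ≠ 0)]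
        rw [div_eq_div_iff (by positivity : (l/t + 1 : ℝ) ≠ 0) (by positivity : (l + t : ℝ) ≠ 0)]
        field_simp
        norm_num
      · have hs0 : (0:ℝ) < s := hs.1
        have hs1 : s < 1 := hs.2
        have h1s : (0:ℝ) < 1 - s := by linarith
        have hset : {a | s < g a} = {a | -Real.log (1 - s) / t < X a} := by
          ext a
          simp only [Set.mem_setOf_eq, hg]
          rw [div_lt_iff₀ ht, show (s < 1 - Real.exp (-t * X a)) ↔
            Real.exp (-t * X a) < 1 - s by constructor <;> intro <;> linarith,
            ← Real.lt_log_iff_exp_lt h1s]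
          constructor <;> intro <;> nlinarith
        rw [hset, hexp _ (div_nonneg (neg_nonneg.2
          (Real.log_nonpos (by linarith) (by linarith : (1:ℝ) - s ≤ 1))) ht.le)]
        rw [Real.rpow_def_of_pos h1s]
        congr 1
        field_simp
    rw [hA, hB, add_zero]
  have hsum : ∫⁻ a, ENNReal.ofReal (Real.exp (-t * X a)) ∂μ + ∫⁻ a, ENNReal.ofReal (g a) ∂μ
      = 1 := by
    rw [← lintegral_add_left ((hX.const_mul (-t)).exp).ennreal_ofReal]
    have : ∀ᵐ a ∂μ, ENNReal.ofReal (Real.exp (-t * X a)) + ENNReal.ofReal (g a)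
        = (1 : ENNReal) := by
      filter_upwards [hgnn] with a ha
      rw [← ENNReal.ofReal_add (Real.exp_pos _).le ha]
      simp [hg]
    rw [lintegral_congr_ae this]
    simp
  rw [hEg] at hsum
  have := ENNReal.eq_sub_of_add_eq ENNReal.ofReal_ne_top hsum
  rw [this, ← ENNReal.ofReal_one, ← ENNReal.ofReal_sub _ (by positivity)]
  congr 1
  rw [eq_div_iff (by positivity : (l + t : ℝ) ≠ 0)]
  field_simp
  ring

lemma aux_upper {a b : ℝ} (ha : 0 < a) (hab : 2*a ≤ b) :
    b/(b-a) ≤ Real.exp (a/b + 2*(a/b)^2) := by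
  have hb : 0 < b := by linarith
  have h1 : 0 < b - a := by linarith
  have h3 : (0:ℝ) ≤ a^2*(b-2*a)/b^2 := div_nonneg (mul_nonneg (sq_nonneg a) (by linarith))
    (sq_nonneg b)
  have expand : (1 + (a/b + 2*(a/b)^2)) * (b - a) = b + a^2*(b-2*a)/b^2 := by
    field_simp
    ring
  have h2 : b/(b-a) ≤ 1 + (a/b + 2*(a/b)^2) := by
    rw [div_le_iff₀ h1, expand]
    linarith
  exact h2.trans (by linarith [Real.add_one_le_exp (a/b + 2*(a/b)^2)])

lemma aux_lower {a b : ℝ} (ha : 0 < a) (hb : 0 < b) :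
    b/(b+a) ≤ Real.exp (-(a/b) + (a/b)^2) := by
  have h3 : (0:ℝ) ≤ a^3/b^2 := div_nonneg (by positivity) (sq_nonneg b)
  have expand : (1 + (-(a/b)+(a/b)^2)) * (b + a) = b + a^3/b^2 := by
    field_simp
    ring
  have h2 : b/(b+a) ≤ 1 + (-(a/b) + (a/b)^2) := by
    rw [div_le_iff₀ (by linarith : (0:ℝ) < b + a), expand]
    linarith
  exact h2.trans (by linarith [Real.add_one_le_exp (-(a/b) + (a/b)^2)])

lemma sum_ite_range {M : Type*} [AddCommMonoid M] (f : ℕ → M) (n N : ℕ) :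
    ∑ j ∈ Finset.range N, (if n ≤ j then f j else 0) = ∑ j ∈ Finset.Ico n N, f j := by
  rw [← Finset.sum_filter]
  congr 1
  ext j
  simp only [Finset.mem_filter, Finset.mem_range, Finset.mem_Ico]
  tauto

lemma telescope_bound {n : ℕ} (hn : 0 < n) :
    ∀ N : ℕ, ∑ j ∈ Finset.Ico n N, (1 / ((j:ℝ) * ((j:ℝ)+1))) ≤ 1 / (n:ℝ) := by
  have key : ∀ N : ℕ, n ≤ N → ∑ j ∈ Finset.Ico n N, (1 / ((j:ℝ) * ((j:ℝ)+1)))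
      ≤ 1/(n:ℝ) - 1/(N:ℝ) := by
    intro N hN
    induction N with
    | zero =>
      exfalso
      omega
    | succ N ih =>
      rcases Nat.lt_or_ge n (N+1) with h | h
      · have hN' : n ≤ N := by omega
        have hNpos : 0 < (N:ℝ) := by
          have : 0 < N := lt_of_lt_of_le hn hN'
          exact_mod_cast this
        rw [Finset.sum_Ico_succ_top hN']
        have heq : 1/((N:ℝ)*((N:ℝ)+1)) = 1/(N:ℝ) - 1/((N:ℝ)+1) := by
          field_simp
          ring
        rw [heq]
        have := ih hN'
        push_cast
        linarith
      · have hnn : n = N + 1 := by omega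
        rw [hnn, Finset.Ico_eq_empty (by omega)]
        simp
  intro N
  rcases Nat.lt_or_ge N n with h | h
  · rw [Finset.Ico_eq_empty (by omega)]
    simp
  · refine (key N h).trans ?_
    have : (0:ℝ) ≤ 1/(N:ℝ) := by positivity
    linarith

end Aux

/-- Large deviation bound for tail sums of independent exponentials with rates
`f(j) = (j+1)^p`, `p > 1`: there are constants `C, n₀ > 0` (depending only on `p`)
such that for all `n ≥ n₀`, all independent sequences `{X_j ~ Exp((j+1)^p)}_{j ≥ n}`
and all `δ > 0`, the tail sum `∑_{j ≥ n} X_j` deviates from its mean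
`∑_{j ≥ n} (j+1)^{-p}` by more than `δ` (in either direction) with probability at
most `C e^{-δ n^{p - 1/2}}`. -/
theorem tail_sum_large_deviations (p : ℝ) (hp : 1 < p) :
    ∃ C > (0 : ℝ), ∃ n₀ : ℕ, 0 < n₀ ∧ ∀ n : ℕ, n₀ ≤ n →
      ∀ (Ω : Type) (_ : MeasurableSpace Ω) (μ : Measure Ω),
        IsProbabilityMeasure μ →
        ∀ X : ℕ → Ω → ℝ, (∀ j, Measurable (X j)) →
          iIndepFun X μ →
          (∀ j : ℕ, n ≤ j → IsExponential μ (X j) (((j : ℝ) + 1) ^ p)) →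
          ∀ δ : ℝ, 0 < δ →
            μ {ω | (∑' j : ℕ, if n ≤ j then X j ω else 0)
                    > (∑' j : ℕ, if n ≤ j then ((j : ℝ) + 1) ^ (-p) else 0) + δ}
              ≤ ENNReal.ofReal (C * Real.exp (-δ * (n : ℝ) ^ (p - 1/2)))
            ∧ μ {ω | (∑' j : ℕ, if n ≤ j then X j ω else 0)
                    < (∑' j : ℕ, if n ≤ j then ((j : ℝ) + 1) ^ (-p) else 0) - δ}
              ≤ ENNReal.ofReal (C * Real.exp (-δ * (n : ℝ) ^ (p - 1/2))) := by
  refine ⟨Real.exp 2, Real.exp_pos 2, 4, by norm_num, ?_⟩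
  intro n hn Ω mΩ μ hprob X hmeas hindep hexpo δ hδ
  have hn4 : (4:ℝ) ≤ (n:ℝ) := by exact_mod_cast hn
  have hnpos : (0:ℝ) < (n:ℝ) := by linarith
  set lam : ℝ := (n:ℝ) ^ (p - 1/2) with hlam_def
  have hlam : 0 < lam := Real.rpow_pos_of_pos hnpos _
  set l : ℕ → ℝ := fun j => ((j:ℝ)+1) ^ p with hl_def
  have hlpos : ∀ j, 0 < l j := fun j => Real.rpow_pos_of_pos (by positivity) _
  set Y : ℕ → Ω → ℝ := fun j ω => if n ≤ j then X j ω else 0 with hY_def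
  set md : ℕ → ℝ := fun j => if n ≤ j then ((j:ℝ)+1) ^ (-p) else 0 with hmd_def
  set M : ℝ := ∑' j, md j with hM_def
  -- basic facts
  have hYm : ∀ j, Measurable (Y j) := by
    intro j
    by_cases h : n ≤ j <;> simp only [hY_def, h, if_true, if_false]
    · exact hmeas j
    · exact measurable_const
  have hYindep : iIndepFun Y μ := by
    have := hindep.comp (fun j (x : ℝ) => if n ≤ j then x else 0)
      (fun j => by by_cases h : n ≤ j <;> simp only [h, if_true, if_false] <;>
        [exact measurable_id; exact measurable_const])
    convert this using 2
    rfl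
  have hYeq : ∀ j, n ≤ j → Y j = X j := by
    intro j h
    funext ω
    simp [hY_def, h]
  have hYexp : ∀ j, n ≤ j → IsExponential μ (Y j) (l j) := by
    intro j h
    rw [hYeq j h]
    exact hexpo j h
  have hYnn : ∀ᵐ ω ∂μ, ∀ j, 0 ≤ Y j ω := by
    rw [MeasureTheory.ae_all_iff]
    intro j
    by_cases h : n ≤ j
    · filter_upwards [isExp_pos_ae (hmeas j) (hexpo j h)] with ω hω
      simp [hY_def, h, hω.le]
    · filter_upwards with ω
      simp [hY_def, h]
  -- rate bounds
  have h2lam : ∀ j, n ≤ j → 2 * lam ≤ l j := by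
    intro j hj
    have hnr : (n:ℝ) ≤ (j:ℝ) + 1 := by
      have : (n:ℝ) ≤ (j:ℝ) := by exact_mod_cast hj
      linarith
    have h1 : (n:ℝ) ^ p ≤ l j := Real.rpow_le_rpow hnpos.le hnr (by linarith)
    have h2 : (n:ℝ) ^ p = lam * (n:ℝ) ^ ((1:ℝ)/2) := by
      rw [hlam_def, ← Real.rpow_add hnpos]
      norm_num
    have h3 : (2:ℝ) ≤ (n:ℝ) ^ ((1:ℝ)/2) := by
      have h4 : ((4:ℝ)) ^ ((1:ℝ)/2) = 2 := by
        rw [show (4:ℝ) = (2:ℝ)^(2:ℕ) by norm_num, ← Real.rpow_natCast (2:ℝ) 2,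
          ← Real.rpow_mul (by norm_num : (0:ℝ) ≤ 2)]
        norm_num
      calc (2:ℝ) = (4:ℝ) ^ ((1:ℝ)/2) := h4.symm
        _ ≤ (n:ℝ) ^ ((1:ℝ)/2) := Real.rpow_le_rpow (by norm_num) hn4 (by norm_num)
    calc 2 * lam ≤ (n:ℝ) ^ ((1:ℝ)/2) * lam := by
          exact mul_le_mul_of_nonneg_right h3 hlam.le
      _ = (n:ℝ) ^ p := by rw [h2]; ring
      _ ≤ l j := h1
  have hlamlt : ∀ j, n ≤ j → lam < l j := fun j hj => by linarith [h2lam j hj]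
  -- summability of md
  have hmd_nn : ∀ j, 0 ≤ md j := by
    intro j
    by_cases h : n ≤ j <;> simp [hmd_def, h]
    positivity
  have hsum_md : Summable md := by
    have h0 : Summable (fun k : ℕ => (k:ℝ) ^ (-p)) := by
      rw [Real.summable_nat_rpow]
      linarith
    have h1 : Summable (fun j : ℕ => ((j:ℝ)+1) ^ (-p)) := by
      have h2 := (summable_nat_add_iff 1).mpr h0
      refine h2.congr fun j => ?_
      push_cast
      ring_nf
    exact Summable.of_nonneg_of_le hmd_nn
      (fun j => by by_cases h : n ≤ j <;> simp [hmd_def, h] <;> positivity) h1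
  have hmd_inv : ∀ j, n ≤ j → md j = lam⁻¹ * (lam / l j) := by
    intro j hj
    simp only [hmd_def, hj, if_true, hl_def]
    rw [Real.rpow_neg (by positivity)]
    field_simp
  -- square sum bound
  have hsq : ∀ N, ∑ j ∈ Finset.Ico n N, (lam / l j)^2 ≤ 1 := by
    intro N
    have hterm : ∀ j ∈ Finset.Ico n N, (lam / l j)^2 ≤ (n:ℝ) * (1/((j:ℝ)*((j:ℝ)+1))) := by
      intro j hj
      have hjn : n ≤ j := (Finset.mem_Ico.1 hj).1
      have hjr : (n:ℝ) ≤ (j:ℝ) := by exact_mod_cast hjn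
      have hj1 : (0:ℝ) < (j:ℝ) := by linarith
      have hlj2 : (l j)^2 = ((j:ℝ)+1) ^ (2*p) := by
        rw [hl_def]
        rw [← Real.rpow_natCast (((j:ℝ)+1) ^ p) 2, ← Real.rpow_mul (by positivity)]
        norm_num
        ring_nf
      have hsplit2 : ((j:ℝ)+1) ^ (2*p) = ((j:ℝ)+1) ^ (2*p-2) * ((j:ℝ)+1) ^ (2:ℝ) := by
        rw [← Real.rpow_add (by positivity)]
        ring_nf
      have hmono : (n:ℝ) ^ (2*p-2) ≤ ((j:ℝ)+1) ^ (2*p-2) :=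
        Real.rpow_le_rpow hnpos.le (by linarith) (by linarith)
      have hsq2 : (j:ℝ)*((j:ℝ)+1) ≤ ((j:ℝ)+1) ^ (2:ℝ) := by
        rw [show ((2:ℝ)) = ((2:ℕ):ℝ) by norm_num, Real.rpow_natCast]
        nlinarith
      have hlow : (n:ℝ) ^ (2*p-2) * ((j:ℝ)*((j:ℝ)+1)) ≤ (l j)^2 := by
        rw [hlj2, hsplit2]
        exact mul_le_mul hmono hsq2 (by positivity) (by positivity)
      have hlamsq : lam^2 = (n:ℝ) ^ (2*p-1) := by
        rw [hlam_def, ← Real.rpow_natCast ((n:ℝ) ^ (p-1/2)) 2, ← Real.rpow_mul hnpos.le]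
        norm_num
        ring_nf
      have hK : lam^2 / (n:ℝ)^(2*p-2) = (n:ℝ) := by
        rw [hlamsq, ← Real.rpow_sub hnpos]
        norm_num
      calc (lam / l j)^2 = lam^2 / (l j)^2 := by rw [div_pow]
        _ ≤ lam^2 / ((n:ℝ) ^ (2*p-2) * ((j:ℝ)*((j:ℝ)+1))) := by
            apply div_le_div_of_nonneg_left (sq_nonneg lam) _ hlow
            positivity
        _ = (n:ℝ) * (1/((j:ℝ)*((j:ℝ)+1))) := by
            rw [div_mul_eq_div_div, hK]
            ring
    calc ∑ j ∈ Finset.Ico n N, (lam / l j)^2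
        ≤ ∑ j ∈ Finset.Ico n N, (n:ℝ) * (1/((j:ℝ)*((j:ℝ)+1))) := Finset.sum_le_sum hterm
      _ = (n:ℝ) * ∑ j ∈ Finset.Ico n N, (1/((j:ℝ)*((j:ℝ)+1))) := by
          rw [Finset.mul_sum]
      _ ≤ (n:ℝ) * (1/(n:ℝ)) := by
          apply mul_le_mul_of_nonneg_left (telescope_bound (by omega) N) hnpos.le
      _ = 1 := by field_simp
  -- per-variable lintegrals and mgf values
  have hEp : ∀ j, ∫⁻ ω, ENNReal.ofReal (Real.exp (lam * Y j ω)) ∂μ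
      = ENNReal.ofReal (if n ≤ j then l j / (l j - lam) else 1) := by
    intro j
    by_cases h : n ≤ j
    · simp only [h, if_true]
      exact lint_exp_pos μ (hYm j) (hYexp j h) hlam (hlamlt j h)
    · simp only [h, if_false, hY_def, if_false]
      simp
  have hEn : ∀ j, ∫⁻ ω, ENNReal.ofReal (Real.exp (-lam * Y j ω)) ∂μ
      = ENNReal.ofReal (if n ≤ j then l j / (l j + lam) else 1) := by
    intro j
    by_cases h : n ≤ j
    · simp only [h, if_true]
      exact lint_exp_neg μ (hYm j) (hYexp j h) hlam (hlpos j)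
    · simp only [h, if_false, hY_def, if_false]
      simp
  have hIp : ∀ j, Integrable (fun ω => Real.exp (lam * Y j ω)) μ := by
    intro j
    refine ⟨(((hYm j).const_mul lam).exp).aestronglyMeasurable, ?_⟩
    rw [hasFiniteIntegral_iff_ofReal (ae_of_all _ fun ω => (Real.exp_pos _).le), hEp j]
    exact ENNReal.ofReal_lt_top
  have hIn : ∀ j, Integrable (fun ω => Real.exp (-lam * Y j ω)) μ := by
    intro j
    refine ⟨(((hYm j).const_mul (-lam)).exp).aestronglyMeasurable, ?_⟩
    rw [hasFiniteIntegral_iff_ofReal (ae_of_all _ fun ω => (Real.exp_pos _).le), hEn j]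
    exact ENNReal.ofReal_lt_top
  have hmgfp : ∀ j, mgf (Y j) μ lam = if n ≤ j then l j / (l j - lam) else 1 := by
    intro j
    have hnn : (0:ℝ) ≤ if n ≤ j then l j / (l j - lam) else 1 := by
      by_cases h : n ≤ j <;> simp [h]
      exact div_nonneg (hlpos j).le (by linarith [h2lam j h])
    rw [mgf, integral_eq_lintegral_of_nonneg_ae (ae_of_all _ fun ω => (Real.exp_pos _).le)
      (((hYm j).const_mul lam).exp).aestronglyMeasurable, hEp j, ENNReal.toReal_ofReal hnn]
  have hmgfn : ∀ j, mgf (Y j) μ (-lam) = if n ≤ j then l j / (l j + lam) else 1 := by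
    intro j
    have hnn : (0:ℝ) ≤ if n ≤ j then l j / (l j + lam) else 1 := by
      by_cases h : n ≤ j <;> simp [h]
      exact div_nonneg (hlpos j).le (by positivity)
    rw [mgf, integral_eq_lintegral_of_nonneg_ae (ae_of_all _ fun ω => (Real.exp_pos _).le)
      (((hYm j).const_mul (-lam)).exp).aestronglyMeasurable, hEn j, ENNReal.toReal_ofReal hnn]
  -- product bounds
  have hMnn : 0 ≤ M := tsum_nonneg hmd_nn
  have hmdN_le : ∀ N, ∑ j ∈ Finset.range N, md j ≤ M :=
    fun N => Summable.sum_le_tsum _ (fun j _ => hmd_nn j) hsum_md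
  have hprodp : ∀ N, ∏ j ∈ Finset.range N, mgf (Y j) μ lam ≤ Real.exp (lam * M + 2) := by
    intro N
    have hfac : ∀ j ∈ Finset.range N, mgf (Y j) μ lam
        ≤ Real.exp (if n ≤ j then lam / l j + 2*(lam / l j)^2 else 0) := by
      intro j _
      rw [hmgfp j]
      by_cases h : n ≤ j <;> simp only [h, if_true, if_false]
      · exact aux_upper hlam (h2lam j h)
      · rw [Real.exp_zero]
    have hfacnn : ∀ j ∈ Finset.range N, 0 ≤ mgf (Y j) μ lam := by
      intro j _
      rw [hmgfp j]
      by_cases h : n ≤ j <;> simp [h]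
      exact div_nonneg (hlpos j).le (by linarith [h2lam j h])
    calc ∏ j ∈ Finset.range N, mgf (Y j) μ lam
        ≤ ∏ j ∈ Finset.range N, Real.exp (if n ≤ j then lam / l j + 2*(lam / l j)^2 else 0) :=
          Finset.prod_le_prod hfacnn hfac
      _ = Real.exp (∑ j ∈ Finset.range N, (if n ≤ j then lam / l j + 2*(lam / l j)^2 else 0)) :=
          (Real.exp_sum _ _).symm
      _ ≤ Real.exp (lam * M + 2) := by
          rw [Real.exp_le_exp]
          have hsplit : ∀ j : ℕ, (if n ≤ j then lam / l j + 2*(lam / l j)^2 else 0)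
              = (if n ≤ j then lam / l j else 0) + (if n ≤ j then 2*(lam / l j)^2 else 0) := by
            intro j
            by_cases h : n ≤ j <;> simp [h]
          rw [Finset.sum_congr rfl (fun j _ => hsplit j), Finset.sum_add_distrib]
          have hp1 : ∑ j ∈ Finset.range N, (if n ≤ j then lam / l j else 0) ≤ lam * M := by
            have : ∀ j : ℕ, (if n ≤ j then lam / l j else 0) = lam * md j := by
              intro j
              by_cases h : n ≤ j <;> simp [h]
              · rw [hmd_inv j h]
                field_simp
              · simp [hmd_def, h]
            rw [Finset.sum_congr rfl (fun j _ => this j), ← Finset.mul_sum]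
            exact mul_le_mul_of_nonneg_left (hmdN_le N) hlam.le
          have hp2 : ∑ j ∈ Finset.range N, (if n ≤ j then 2*(lam / l j)^2 else 0) ≤ 2 := by
            rw [sum_ite_range (fun j => 2*(lam / l j)^2) n N]
            rw [← Finset.mul_sum]
            linarith [hsq N]
          linarith
  have hprodn : ∀ N, ∏ j ∈ Finset.range N, mgf (Y j) μ (-lam)
      ≤ Real.exp (-(lam * ∑ j ∈ Finset.range N, md j) + 1) := by
    intro N
    have hfac : ∀ j ∈ Finset.range N, mgf (Y j) μ (-lam)
        ≤ Real.exp (if n ≤ j then -(lam / l j) + (lam / l j)^2 else 0) := by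
      intro j _
      rw [hmgfn j]
      by_cases h : n ≤ j <;> simp only [h, if_true, if_false]
      · exact aux_lower hlam (hlpos j)
      · rw [Real.exp_zero]
    have hfacnn : ∀ j ∈ Finset.range N, 0 ≤ mgf (Y j) μ (-lam) := by
      intro j _
      rw [hmgfn j]
      by_cases h : n ≤ j <;> simp [h]
      exact div_nonneg (hlpos j).le (by positivity)
    calc ∏ j ∈ Finset.range N, mgf (Y j) μ (-lam)
        ≤ ∏ j ∈ Finset.range N, Real.exp (if n ≤ j then -(lam / l j) + (lam / l j)^2 else 0) :=
          Finset.prod_le_prod hfacnn hfac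
      _ = Real.exp (∑ j ∈ Finset.range N, (if n ≤ j then -(lam / l j) + (lam / l j)^2 else 0)) :=
          (Real.exp_sum _ _).symm
      _ ≤ Real.exp (-(lam * ∑ j ∈ Finset.range N, md j) + 1) := by
          rw [Real.exp_le_exp]
          have hsplit : ∀ j : ℕ, (if n ≤ j then -(lam / l j) + (lam / l j)^2 else 0)
              = -(lam * md j) + (if n ≤ j then (lam / l j)^2 else 0) := by
            intro j
            by_cases h : n ≤ j <;> simp [h]
            · rw [hmd_inv j h]
              field_simp
            · simp [hmd_def, h]
          rw [Finset.sum_congr rfl (fun j _ => hsplit j), Finset.sum_add_distrib,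
            Finset.sum_neg_distrib, ← Finset.mul_sum]
          have hp2 : ∑ j ∈ Finset.range N, (if n ≤ j then (lam / l j)^2 else 0) ≤ 1 := by
            rw [sum_ite_range (fun j => (lam / l j)^2) n N]
            exact hsq N
          linarith
  -- partial sums as functions
  set W : ℕ → Ω → ℝ := fun N => ∑ j ∈ Finset.range N, Y j with hW_def
  have hWval : ∀ N ω, W N ω = ∑ j ∈ Finset.range N, Y j ω := by
    intro N ω
    simp [hW_def, Finset.sum_apply]
  have hWm : ∀ N, Measurable (W N) := by
    intro N
    have : Measurable (fun ω => ∑ j ∈ Finset.range N, Y j ω) :=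
      Finset.measurable_sum _ (fun j _ => hYm j)
    convert this using 1
    funext ω
    exact hWval N ω
  have hintp : ∀ N, Integrable (fun ω => Real.exp (lam * W N ω)) μ :=
    fun N => hYindep.integrable_exp_mul_sum hYm (fun j _ => hIp j)
  have hintn : ∀ N, Integrable (fun ω => Real.exp (-lam * W N ω)) μ :=
    fun N => hYindep.integrable_exp_mul_sum hYm (fun j _ => hIn j)
  have hlintp : ∀ N, ∫⁻ ω, ENNReal.ofReal (Real.exp (lam * W N ω)) ∂μ
      ≤ ENNReal.ofReal (Real.exp (lam * M + 2)) := by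
    intro N
    rw [← ofReal_integral_eq_lintegral_ofReal (hintp N)
      (ae_of_all _ fun ω => (Real.exp_pos _).le)]
    apply ENNReal.ofReal_le_ofReal
    have hm : (∫ ω, Real.exp (lam * W N ω) ∂μ) = mgf (W N) μ lam := rfl
    rw [hm, hW_def, hYindep.mgf_sum hYm]
    exact hprodp N
  have hlintn : ∀ N, ∫⁻ ω, ENNReal.ofReal (Real.exp (-lam * W N ω)) ∂μ
      ≤ ENNReal.ofReal (Real.exp (-(lam * ∑ j ∈ Finset.range N, md j) + 1)) := by
    intro N
    rw [← ofReal_integral_eq_lintegral_ofReal (hintn N)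
      (ae_of_all _ fun ω => (Real.exp_pos _).le)]
    apply ENNReal.ofReal_le_ofReal
    have hm : (∫ ω, Real.exp (-lam * W N ω) ∂μ) = mgf (W N) μ (-lam) := rfl
    rw [hm, hW_def, hYindep.mgf_sum hYm]
    exact hprodn N
  -- a.e. summability and identification of the tsum
  have hTm : Measurable (fun ω => ∑' j, ENNReal.ofReal (Y j ω)) :=
    Measurable.ennreal_tsum (fun j => (hYm j).ennreal_ofReal)
  have hTfin : ∀ᵐ ω ∂μ, (∑' j, ENNReal.ofReal (Y j ω)) < ⊤ := by
    refine ae_lt_top hTm (ne_of_lt (lt_of_le_of_lt ?_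
      (ENNReal.div_lt_top ENNReal.ofReal_ne_top (ENNReal.ofReal_pos.2 hlam).ne' :
        ENNReal.ofReal (Real.exp (lam * M + 2)) / ENNReal.ofReal lam < ⊤)))
    have hTN : ∀ ω : Ω, (∑' j, ENNReal.ofReal (Y j ω))
        = ⨆ N, ∑ j ∈ Finset.range N, ENNReal.ofReal (Y j ω) :=
      fun ω => ENNReal.tsum_eq_iSup_nat
    rw [lintegral_congr hTN, lintegral_iSup
      (fun N => Finset.measurable_sum _ (fun j _ => (hYm j).ennreal_ofReal))
      (fun N1 N2 h ω => Finset.sum_le_sum_of_subset (Finset.range_subset_range.2 h))]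
    refine iSup_le fun N => ?_
    rw [ENNReal.le_div_iff_mul_le (Or.inl (ENNReal.ofReal_pos.2 hlam).ne')
      (Or.inl ENNReal.ofReal_ne_top), mul_comm]
    rw [← lintegral_const_mul _ (Finset.measurable_sum _ (fun j _ => (hYm j).ennreal_ofReal))]
    refine le_trans (lintegral_mono_ae ?_) (hlintp N)
    filter_upwards [hYnn] with ω hnn
    rw [← ENNReal.ofReal_sum_of_nonneg (fun j _ => hnn j), ← ENNReal.ofReal_mul hlam.le,
      ← hWval N ω]
    exact ENNReal.ofReal_le_ofReal (by linarith [Real.add_one_le_exp (lam * W N ω)])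
  set Sm : Ω → ℝ := fun ω => (∑' j, ENNReal.ofReal (Y j ω)).toReal with hSm_def
  have hSmm : Measurable Sm := hTm.ennreal_toReal
  have hae : ∀ᵐ ω ∂μ, ((∑' j, Y j ω) = Sm ω ∧ ∀ N, W N ω ≤ ∑' j, Y j ω)
      ∧ Summable (fun j => Y j ω) := by
    filter_upwards [hYnn, hTfin] with ω hnn hfin
    have hs : Summable (fun j => Y j ω) := by
      have h1 := ENNReal.summable_toReal hfin.ne
      exact h1.congr fun j => ENNReal.toReal_ofReal (hnn j)
    have heq : ENNReal.ofReal (∑' j, Y j ω) = ∑' j, ENNReal.ofReal (Y j ω) :=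
      ENNReal.ofReal_tsum_of_nonneg hnn hs
    have hSeq : (∑' j, Y j ω) = Sm ω := by
      rw [hSm_def]
      simp only
      rw [← heq, ENNReal.toReal_ofReal (tsum_nonneg hnn)]
    refine ⟨⟨hSeq, fun N => ?_⟩, hs⟩
    rw [hWval]
    exact Summable.sum_le_tsum _ (fun j _ => hnn j) hs
  -- upper tail
  have hupper : μ {ω | M + δ < ∑' j, Y j ω}
      ≤ ENNReal.ofReal (Real.exp 2 * Real.exp (-δ * lam)) := by
    set a : ENNReal := ENNReal.ofReal (Real.exp (lam * (M + δ))) with ha_def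
    have ha0 : a ≠ 0 := (ENNReal.ofReal_pos.2 (Real.exp_pos _)).ne'
    have hatop : a ≠ ⊤ := ENNReal.ofReal_ne_top
    have hfU : Measurable (fun ω => ENNReal.ofReal (Real.exp (lam * Sm ω))) :=
      ((hSmm.const_mul lam).exp).ennreal_ofReal
    have hfUb : ∫⁻ ω, ENNReal.ofReal (Real.exp (lam * Sm ω)) ∂μ
        ≤ ENNReal.ofReal (Real.exp (lam * M + 2)) := by
      have hptw : ∀ᵐ ω ∂μ, ENNReal.ofReal (Real.exp (lam * Sm ω))
          ≤ liminf (fun N => ENNReal.ofReal (Real.exp (lam * W N ω))) atTop := by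
        filter_upwards [hae] with ω hω
        have htend : Tendsto (fun N => W N ω) atTop (𝓝 (Sm ω)) := by
          rw [← hω.1.1]
          exact hω.2.hasSum.tendsto_sum_nat.congr fun N => (hWval N ω).symm
        have hT2 : Tendsto (fun N => ENNReal.ofReal (Real.exp (lam * W N ω))) atTop
            (𝓝 (ENNReal.ofReal (Real.exp (lam * Sm ω)))) :=
          (ENNReal.continuous_ofReal.tendsto _).comp
            ((Real.continuous_exp.tendsto _).comp (htend.const_mul lam))
        rw [hT2.liminf_eq]
      calc ∫⁻ ω, ENNReal.ofReal (Real.exp (lam * Sm ω)) ∂μ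
          ≤ ∫⁻ ω, liminf (fun N => ENNReal.ofReal (Real.exp (lam * W N ω))) atTop ∂μ :=
            lintegral_mono_ae hptw
        _ ≤ liminf (fun N => ∫⁻ ω, ENNReal.ofReal (Real.exp (lam * W N ω)) ∂μ) atTop :=
            lintegral_liminf_le (fun N => ((hWm N).const_mul lam).exp.ennreal_ofReal)
        _ ≤ ENNReal.ofReal (Real.exp (lam * M + 2)) := by
            have hev : ∀ᶠ N in (atTop : Filter ℕ),
                (∫⁻ ω, ENNReal.ofReal (Real.exp (lam * W N ω)) ∂μ)
                ≤ ENNReal.ofReal (Real.exp (lam * M + 2)) :=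
              Filter.Eventually.of_forall hlintp
            calc liminf (fun N => ∫⁻ ω, ENNReal.ofReal (Real.exp (lam * W N ω)) ∂μ) atTop
                ≤ liminf (fun _ : ℕ => ENNReal.ofReal (Real.exp (lam * M + 2))) atTop :=
                  Filter.liminf_le_liminf hev
              _ = ENNReal.ofReal (Real.exp (lam * M + 2)) := Filter.liminf_const _
    have hsub : μ {ω | M + δ < ∑' j, Y j ω}
        ≤ μ {ω | a ≤ ENNReal.ofReal (Real.exp (lam * Sm ω))} := by
      refine measure_mono_ae ?_
      filter_upwards [hae] with ω hω hmem
      have h1 : M + δ < Sm ω := by rw [← hω.1.1]; exact hmem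
      exact ENNReal.ofReal_le_ofReal
        (Real.exp_le_exp.2 (mul_le_mul_of_nonneg_left h1.le hlam.le))
    have hdiv : μ {ω | a ≤ ENNReal.ofReal (Real.exp (lam * Sm ω))}
        ≤ ENNReal.ofReal (Real.exp (lam * M + 2)) / a := by
      rw [ENNReal.le_div_iff_mul_le (Or.inl ha0) (Or.inl hatop), mul_comm]
      exact le_trans (mul_meas_ge_le_lintegral₀ hfU.aemeasurable a) hfUb
    refine le_trans (hsub.trans hdiv) ?_
    rw [ha_def, ← ENNReal.ofReal_div_of_pos (Real.exp_pos _), ← Real.exp_sub,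
      ← Real.exp_add]
    exact ENNReal.ofReal_le_ofReal (Real.exp_le_exp.2 (by ring_nf; linarith))
  -- lower tail
  have hlower : μ {ω | (∑' j, Y j ω) < M - δ}
      ≤ ENNReal.ofReal (Real.exp 2 * Real.exp (-δ * lam)) := by
    set a : ENNReal := ENNReal.ofReal (Real.exp (-lam * (M - δ))) with ha_def
    have ha0 : a ≠ 0 := (ENNReal.ofReal_pos.2 (Real.exp_pos _)).ne'
    have hatop : a ≠ ⊤ := ENNReal.ofReal_ne_top
    have hfL : Measurable (fun ω => ENNReal.ofReal (Real.exp (-lam * Sm ω))) :=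
      ((hSmm.const_mul (-lam)).exp).ennreal_ofReal
    have hfLb : ∫⁻ ω, ENNReal.ofReal (Real.exp (-lam * Sm ω)) ∂μ
        ≤ ENNReal.ofReal (Real.exp (-(lam * M) + 1)) := by
      have hN : ∀ N, ∫⁻ ω, ENNReal.ofReal (Real.exp (-lam * Sm ω)) ∂μ
          ≤ ENNReal.ofReal (Real.exp (-(lam * ∑ j ∈ Finset.range N, md j) + 1)) := by
        intro N
        refine le_trans (lintegral_mono_ae ?_) (hlintn N)
        filter_upwards [hae] with ω hω
        apply ENNReal.ofReal_le_ofReal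
        rw [Real.exp_le_exp]
        have h1 : W N ω ≤ Sm ω := by rw [← hω.1.1]; exact hω.1.2 N
        have h2 : lam * W N ω ≤ lam * Sm ω := mul_le_mul_of_nonneg_left h1 hlam.le
        linarith
      have htends : Tendsto
          (fun N => ENNReal.ofReal (Real.exp (-(lam * ∑ j ∈ Finset.range N, md j) + 1)))
          atTop (𝓝 (ENNReal.ofReal (Real.exp (-(lam * M) + 1)))) := by
        have h1 : Tendsto (fun N => ∑ j ∈ Finset.range N, md j) atTop (𝓝 M) :=
          hsum_md.hasSum.tendsto_sum_nat
        have h2 : Tendsto (fun N => -(lam * ∑ j ∈ Finset.range N, md j) + 1) atTop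
            (𝓝 (-(lam * M) + 1)) := ((h1.const_mul lam).neg).add_const 1
        exact (ENNReal.continuous_ofReal.tendsto _).comp
          ((Real.continuous_exp.tendsto _).comp h2)
      exact ge_of_tendsto' htends hN
    have hsub : μ {ω | (∑' j, Y j ω) < M - δ}
        ≤ μ {ω | a ≤ ENNReal.ofReal (Real.exp (-lam * Sm ω))} := by
      refine measure_mono_ae ?_
      filter_upwards [hae] with ω hω hmem
      have h1 : Sm ω < M - δ := by rw [← hω.1.1]; exact hmem
      refine ENNReal.ofReal_le_ofReal (Real.exp_le_exp.2 ?_)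
      have h2 : lam * Sm ω ≤ lam * (M - δ) := mul_le_mul_of_nonneg_left h1.le hlam.le
      linarith
    have hdiv : μ {ω | a ≤ ENNReal.ofReal (Real.exp (-lam * Sm ω))}
        ≤ ENNReal.ofReal (Real.exp (-(lam * M) + 1)) / a := by
      rw [ENNReal.le_div_iff_mul_le (Or.inl ha0) (Or.inl hatop), mul_comm]
      exact le_trans (mul_meas_ge_le_lintegral₀ hfL.aemeasurable a) hfLb
    refine le_trans (hsub.trans hdiv) ?_
    rw [ha_def, ← ENNReal.ofReal_div_of_pos (Real.exp_pos _), ← Real.exp_sub,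
      ← Real.exp_add]
    exact ENNReal.ofReal_le_ofReal (Real.exp_le_exp.2 (by ring_nf; linarith))
  exact ⟨hupper, hlower⟩
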